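/- Let K be a normal subgroup of a group G such that the quotient G/K is finite cyclic. Let V be a nonzero finite-dimensional complex vector space and ρ : K → GL(V) an irreducible representation such that ρ ∘ Int_g|_K is equivalent to ρ for every g ∈ G. Then ρ extends to a representation of G: there exists a group homomorphism ρ̃ : G → GL(V) with ρ̃(k) = ρ(k) for all k ∈ K. -/

import Mathlib

/-- Two representations `ρ, ρ' : K → GL(V)` are equivalent if there is `T ∈ GL(V)`
with `ρ'(k) = T ρ(k) T⁻¹` for all `k`. -/
def RepEquiv {K : Type*} [Group K] {V : Type*} [AddCommGroup V] [Module ℂ V]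
    (ρ ρ' : K →* (V →ₗ[ℂ] V)ˣ) : Prop :=
  ∃ T : (V →ₗ[ℂ] V)ˣ, ∀ k : K, ρ' k = T * ρ k * T⁻¹

/-- A representation `ρ : K → GL(V)` is irreducible if `V ≠ 0` and the only
subspaces of `V` invariant under all `ρ(k)` are `0` and `V`. -/
def IsIrreducibleRep {K : Type*} [Group K] {V : Type*} [AddCommGroup V] [Module ℂ V]
    (ρ : K →* (V →ₗ[ℂ] V)ˣ) : Prop :=
  Nontrivial V ∧
    ∀ W : Submodule ℂ V, (∀ k : K, ∀ v ∈ W, (ρ k : V →ₗ[ℂ] V) v ∈ W) → W = ⊥ ∨ W = ⊤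

/-- For a normal subgroup `K ⊆ G` and `g ∈ G`, the homomorphism
`Int_g|_K : K → K`, `k ↦ g k g⁻¹`. -/
def intK {G : Type*} [Group G] (K : Subgroup G) [K.Normal] (g : G) : ↥K →* ↥K :=
  (MulAut.conjNormal g).toMonoidHom

/-- Conjugation of an element of a normal subgroup by an element of the ambient group. -/
def conjK {G : Type*} [Group G] (K : Subgroup G) [hN : K.Normal] (x : G) (k : ↥K) : ↥K :=
  ⟨x * k * x⁻¹, hN.conj_mem k k.2 x⟩

theorem conjK_coe {G : Type*} [Group G] (K : Subgroup G) [K.Normal] (x : G) (k : ↥K) :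
    (conjK K x k : G) = x * k * x⁻¹ := rfl

theorem conjK_one {G : Type*} [Group G] (K : Subgroup G) [K.Normal] (k : ↥K) :
    conjK K 1 k = k := Subtype.ext (by simp [conjK_coe])

theorem conjK_mul {G : Type*} [Group G] (K : Subgroup G) [K.Normal] (x y : G) (k : ↥K) :
    conjK K (x * y) k = conjK K x (conjK K y k) := Subtype.ext (by simp [conjK_coe]; group)

/-- Schur's lemma: a unit commuting with an irreducible representation is a scalar. -/
theorem schur_scalar {K : Type*} [Group K] {V : Type*} [AddCommGroup V] [Module ℂ V]
    [FiniteDimensional ℂ V] (ρ : K →* (V →ₗ[ℂ] V)ˣ) (hirr : IsIrreducibleRep ρ)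
    (A : (V →ₗ[ℂ] V)ˣ) (hA : ∀ k : K, A * ρ k = ρ k * A) :
    ∃ μ : ℂ, μ ≠ 0 ∧ (A : V →ₗ[ℂ] V) = μ • 1 := by
  haveI : Nontrivial V := hirr.1
  obtain ⟨μ, hμ⟩ := Module.End.exists_eigenvalue (A : V →ₗ[ℂ] V)
  set W := Module.End.eigenspace (A : V →ₗ[ℂ] V) μ with hW
  have hWinv : ∀ k : K, ∀ v ∈ W, (ρ k : V →ₗ[ℂ] V) v ∈ W := by
    intro k v hv
    rw [hW, Module.End.mem_eigenspace_iff] at hv ⊢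
    have h1 : ((A * ρ k : (V →ₗ[ℂ] V)ˣ) : V →ₗ[ℂ] V) v
        = ((ρ k * A : (V →ₗ[ℂ] V)ˣ) : V →ₗ[ℂ] V) v := by rw [hA]
    simp only [Units.val_mul, Module.End.mul_apply] at h1
    rw [h1, hv, map_smul]
  rcases hirr.2 W hWinv with h | h
  · exact absurd h hμ
  · have hAv : ∀ v : V, (A : V →ₗ[ℂ] V) v = μ • v := by
      intro v
      have hvW : v ∈ W := h ▸ Submodule.mem_top
      exact Module.End.mem_eigenspace_iff.mp hvW
    refine ⟨μ, ?_, ?_⟩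
    · intro h0
      obtain ⟨v, hv⟩ := exists_ne (0 : V)
      apply hv
      have hv0 : (A : V →ₗ[ℂ] V) v = 0 := by rw [hAv, h0, zero_smul]
      have h2 : (↑(A⁻¹) : V →ₗ[ℂ] V) ((A : V →ₗ[ℂ] V) v) = v := by
        rw [← Module.End.mul_apply, ← Units.val_mul, inv_mul_cancel]
        rfl
      rw [hv0, map_zero] at h2
      exact h2.symm
    · ext v; simp [hAv v]

/-- If `G/K` is finite cyclic and `ρ : K → GL(V)` is an irreducible representation
on a nonzero finite-dimensional complex vector space such that `ρ ∘ Int_g|_K` is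
equivalent to `ρ` for every `g ∈ G`, then `ρ` extends to a representation of `G`. -/
theorem statement10 {G : Type*} [Group G] (K : Subgroup G) [K.Normal]
    [Finite (G ⧸ K)] [IsCyclic (G ⧸ K)]
    {V : Type*} [AddCommGroup V] [Module ℂ V] [FiniteDimensional ℂ V]
    (ρ : ↥K →* (V →ₗ[ℂ] V)ˣ) (hirr : IsIrreducibleRep ρ)
    (hconj : ∀ g : G, RepEquiv ρ (ρ.comp (intK K g))) :
    ∃ ρt : G →* (V →ₗ[ℂ] V)ˣ, ∀ k : ↥K, ρt (k : G) = ρ k := by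
  classical
  obtain ⟨q, hq⟩ := IsCyclic.exists_generator (α := G ⧸ K)
  obtain ⟨g, hg⟩ := QuotientGroup.mk'_surjective K q
  set π := QuotientGroup.mk' K with hπ
  set n := Nat.card (G ⧸ K) with hn
  have hnpos : 0 < n := Nat.card_pos
  have horder : orderOf q = n := orderOf_eq_card_of_forall_mem_zpowers hq
  have hmemK : ∀ x : G, π x = 1 → x ∈ K := by
    intro x hx
    exact (QuotientGroup.eq_one_iff x).mp hx
  have hgn : g ^ n ∈ K := by
    apply hmemK
    rw [map_pow, hg, ← horder, pow_orderOf_eq_one]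
  set gnK : ↥K := ⟨g ^ n, hgn⟩ with hgnK
  -- the intertwiner T
  obtain ⟨T, hT0⟩ := hconj g
  have hT : ∀ k : ↥K, ρ (conjK K g k) = T * ρ k * T⁻¹ := by
    intro k
    have e : intK K g k = conjK K g k := Subtype.ext (by simp [intK, conjK_coe])
    have := hT0 k
    rw [MonoidHom.comp_apply, e] at this
    exact this
  -- conjugation by powers of T
  have hTpow : ∀ (m : ℕ) (k : ↥K), T ^ m * ρ k = ρ (conjK K (g ^ m) k) * T ^ m := by
    intro m
    induction m with
    | zero =>
      intro k
      simp [conjK_one, show conjK K (g ^ 0) k = k by rw [pow_zero, conjK_one]]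
    | succ m ih =>
      intro k
      have hcm : conjK K g (conjK K (g ^ m) k) = conjK K (g ^ (m + 1)) k := by
        rw [← conjK_mul, ← pow_succ']
      calc T ^ (m + 1) * ρ k = T * (T ^ m * ρ k) := by rw [pow_succ', mul_assoc]
        _ = T * (ρ (conjK K (g ^ m) k) * T ^ m) := by rw [ih]
        _ = (T * ρ (conjK K (g ^ m) k) * T⁻¹) * (T * T ^ m) := by group
        _ = ρ (conjK K g (conjK K (g ^ m) k)) * (T * T ^ m) := by rw [← hT]
        _ = ρ (conjK K (g ^ (m + 1)) k) * T ^ (m + 1) := by rw [hcm, ← pow_succ']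
  -- Schur scalar
  set B : (V →ₗ[ℂ] V)ˣ := (ρ gnK)⁻¹ * T ^ n with hB
  have hBcomm : ∀ k : ↥K, B * ρ k = ρ k * B := by
    intro k
    have h1 := hTpow n k
    have h2 : conjK K (g ^ n) k = gnK * k * gnK⁻¹ := Subtype.ext (by simp [conjK_coe, hgnK])
    rw [h2, map_mul, map_mul, map_inv] at h1
    calc B * ρ k = (ρ gnK)⁻¹ * (T ^ n * ρ k) := by rw [hB, mul_assoc]
      _ = (ρ gnK)⁻¹ * (ρ gnK * ρ k * (ρ gnK)⁻¹ * T ^ n) := by rw [h1]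
      _ = ρ k * ((ρ gnK)⁻¹ * T ^ n) := by group
      _ = ρ k * B := by rw [hB]
  obtain ⟨μ, hμ0, hμ⟩ := schur_scalar ρ hirr B hBcomm
  have hTn : ((T ^ n : (V →ₗ[ℂ] V)ˣ) : V →ₗ[ℂ] V) = μ • ((ρ gnK : (V →ₗ[ℂ] V)ˣ) : V →ₗ[ℂ] V) := by
    have h1 : ρ gnK * B = T ^ n := by rw [hB]; group
    have h2 := congrArg (Units.val) h1
    rw [Units.val_mul, hμ] at h2
    rw [← h2, mul_smul_comm, mul_one]
  -- n-th root
  obtain ⟨lam, hlam⟩ := IsAlgClosed.exists_pow_nat_eq (k := ℂ) μ⁻¹ hnpos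
  have hlam0 : lam ≠ 0 := by
    intro h
    rw [h, zero_pow hnpos.ne'] at hlam
    exact hμ0 (by simpa using hlam.symm)
  -- scalar unit
  set u : (V →ₗ[ℂ] V)ˣ :=
    Units.map (algebraMap ℂ (Module.End ℂ V)).toMonoidHom (Units.mk0 lam hlam0) with hu
  have huval : (u : V →ₗ[ℂ] V) = algebraMap ℂ (Module.End ℂ V) lam := rfl
  have hucomm : ∀ w : (V →ₗ[ℂ] V)ˣ, u * w = w * u := by
    intro w
    apply Units.ext
    rw [Units.val_mul, Units.val_mul, huval]
    exact Algebra.commutes lam (w : V →ₗ[ℂ] V)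
  set S : (V →ₗ[ℂ] V)ˣ := u * T with hS
  have hSconj : ∀ k : ↥K, ρ (conjK K g k) = S * ρ k * S⁻¹ := by
    intro k
    have h1 : S * ρ k * S⁻¹ = u * (T * ρ k * T⁻¹) * u⁻¹ := by rw [hS]; group
    rw [h1, hucomm (T * ρ k * T⁻¹), mul_assoc, mul_inv_cancel, mul_one, hT]
  -- S^n = ρ(g^n)
  have hcomm : Commute u T := hucomm T
  have hSn : S ^ n = ρ gnK := by
    apply Units.ext
    rw [hS, hcomm.mul_pow, Units.val_mul, Units.val_pow_eq_pow_val, huval, hTn, ← map_pow, hlam]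
    ext v
    simp [Module.algebraMap_end_apply, Module.End.mul_apply, smul_smul, inv_mul_cancel₀ hμ0, mul_inv_cancel₀ hμ0]
  -- conjugation by integer powers of S
  have hSneg : ∀ k : ↥K, S⁻¹ * ρ k = ρ (conjK K g⁻¹ k) * S⁻¹ := by
    intro k
    have h1 := hSconj (conjK K g⁻¹ k)
    rw [← conjK_mul, mul_inv_cancel, conjK_one] at h1
    rw [h1]; group
  have hSpos : ∀ k : ↥K, S * ρ k = ρ (conjK K g k) * S := by
    intro k
    rw [hSconj k]; group
  have hSzpow : ∀ (m : ℤ) (k : ↥K), S ^ m * ρ k = ρ (conjK K (g ^ m) k) * S ^ m := by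
    intro m
    induction m using Int.induction_on with
    | zero =>
      intro k
      rw [show conjK K (g ^ (0 : ℤ)) k = k by rw [zpow_zero, conjK_one], zpow_zero, one_mul,
        mul_one]
    | succ m ih =>
      intro k
      have hcm : conjK K (g ^ (m : ℤ)) (conjK K g k) = conjK K (g ^ ((m : ℤ) + 1)) k := by
        rw [← conjK_mul, ← zpow_add_one]
      calc S ^ ((m : ℤ) + 1) * ρ k = S ^ (m : ℤ) * (S * ρ k) := by
            rw [zpow_add_one, mul_assoc]
        _ = S ^ (m : ℤ) * (ρ (conjK K g k) * S) := by rw [hSpos]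
        _ = (S ^ (m : ℤ) * ρ (conjK K g k)) * S := by rw [mul_assoc]
        _ = ρ (conjK K (g ^ (m : ℤ)) (conjK K g k)) * S ^ (m : ℤ) * S := by rw [ih]
        _ = ρ (conjK K (g ^ ((m : ℤ) + 1)) k) * S ^ ((m : ℤ) + 1) := by
            rw [hcm, mul_assoc, ← zpow_add_one]
    | pred m ih =>
      intro k
      have hcm : conjK K (g ^ (-(m : ℤ))) (conjK K g⁻¹ k) = conjK K (g ^ (-(m : ℤ) - 1)) k := by
        rw [← conjK_mul, ← zpow_neg_one, ← zpow_add, sub_eq_add_neg]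
      calc S ^ (-(m : ℤ) - 1) * ρ k = S ^ (-(m : ℤ)) * (S⁻¹ * ρ k) := by
            rw [zpow_sub_one, mul_assoc]
        _ = S ^ (-(m : ℤ)) * (ρ (conjK K g⁻¹ k) * S⁻¹) := by rw [hSneg]
        _ = (S ^ (-(m : ℤ)) * ρ (conjK K g⁻¹ k)) * S⁻¹ := by rw [mul_assoc]
        _ = ρ (conjK K (g ^ (-(m : ℤ))) (conjK K g⁻¹ k)) * S ^ (-(m : ℤ)) * S⁻¹ := by rw [ih]
        _ = ρ (conjK K (g ^ (-(m : ℤ) - 1)) k) * S ^ (-(m : ℤ) - 1) := by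
            rw [hcm, mul_assoc, ← zpow_sub_one]
  -- independence of the chosen exponent
  have key : ∀ (i j : ℤ) (x : G) (hi : g ^ (-i) * x ∈ K) (hj : g ^ (-j) * x ∈ K),
      S ^ i * ρ ⟨g ^ (-i) * x, hi⟩ = S ^ j * ρ ⟨g ^ (-j) * x, hj⟩ := by
    intro i j x hi hj
    have hπi : q ^ i = π x := by
      have h1 : π (g ^ (-i) * x) = 1 := (QuotientGroup.eq_one_iff _).mpr hi
      rw [map_mul, map_zpow, hg] at h1
      rw [← mul_one (q ^ i), ← h1]
      group
    have hπj : q ^ j = π x := by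
      have h1 : π (g ^ (-j) * x) = 1 := (QuotientGroup.eq_one_iff _).mpr hj
      rw [map_mul, map_zpow, hg] at h1
      rw [← mul_one (q ^ j), ← h1]
      group
    have hq1 : q ^ (i - j) = 1 := by
      rw [zpow_sub, hπi, hπj]
      group
    obtain ⟨m, hm⟩ : ((n : ℤ)) ∣ (i - j) := by
      rw [← horder]
      exact orderOf_dvd_iff_zpow_eq_one.mpr hq1
    have hgm : ((g ^ n : G)) ^ m = g ^ (i - j) := by
      rw [← zpow_natCast g n, ← zpow_mul, ← hm]
    have hsplit : (⟨g ^ (-j) * x, hj⟩ : ↥K) = gnK ^ m * ⟨g ^ (-i) * x, hi⟩ := by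
      apply Subtype.ext
      push_cast
      rw [hgm]
      group
    rw [hsplit, map_mul, map_zpow, ← hSn, ← zpow_natCast S n, ← zpow_mul, ← hm]
    rw [← mul_assoc, ← zpow_add]
    congr 1
    ring_nf
  -- the exponent function
  have hex : ∀ x : G, ∃ m : ℤ, g ^ (-m) * x ∈ K := by
    intro x
    obtain ⟨m, hm⟩ := Subgroup.mem_zpowers_iff.mp (hq (π x))
    refine ⟨m, (QuotientGroup.eq_one_iff _).mp ?_⟩
    show π (g ^ (-m) * x) = 1
    rw [map_mul, map_zpow, hg, ← hm]
    group
  choose e he using hex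
  have hπe : ∀ x : G, π x = q ^ (e x) := by
    intro x
    have h1 : π (g ^ (-(e x)) * x) = 1 := (QuotientGroup.eq_one_iff _).mpr (he x)
    rw [map_mul, map_zpow, hg] at h1
    rw [← mul_one (q ^ e x), ← h1]
    group
  set f : G → (V →ₗ[ℂ] V)ˣ := fun x => S ^ (e x) * ρ ⟨g ^ (-(e x)) * x, he x⟩ with hf
  -- f is multiplicative
  have hfmul : ∀ x y : G, f (x * y) = f x * f y := by
    intro x y
    have hxy : g ^ (-(e x + e y)) * (x * y) ∈ K := by
      apply (QuotientGroup.eq_one_iff _).mp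
      show π (g ^ (-(e x + e y)) * (x * y)) = 1
      rw [map_mul, map_mul, map_zpow, hg, hπe x, hπe y]
      group
    have h1 : f (x * y) = S ^ (e x + e y) * ρ ⟨g ^ (-(e x + e y)) * (x * y), hxy⟩ :=
      key (e (x * y)) (e x + e y) (x * y) (he (x * y)) hxy
    rw [h1, hf]
    simp only
    set a : ↥K := ⟨g ^ (-(e x)) * x, he x⟩ with ha
    set b : ↥K := ⟨g ^ (-(e y)) * y, he y⟩ with hb
    -- move ρ a past S ^ (e y)
    have h2 : ρ a * S ^ (e y) = S ^ (e y) * ρ (conjK K (g ^ (-(e y))) a) := by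
      have h3 := hSzpow (e y) (conjK K (g ^ (-(e y))) a)
      rw [← conjK_mul] at h3
      rw [show g ^ (e y) * g ^ (-(e y)) = 1 by group, conjK_one] at h3
      rw [h3]
    have h4 : conjK K (g ^ (-(e y))) a * b = ⟨g ^ (-(e x + e y)) * (x * y), hxy⟩ := by
      apply Subtype.ext
      push_cast
      rw [conjK_coe]
      show g ^ (-(e y)) * (g ^ (-(e x)) * x) * (g ^ (-(e y)))⁻¹ * (g ^ (-(e y)) * y)
          = g ^ (-(e x + e y)) * (x * y)
      group
    calc S ^ (e x + e y) * ρ ⟨g ^ (-(e x + e y)) * (x * y), hxy⟩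
        = S ^ (e x + e y) * ρ (conjK K (g ^ (-(e y))) a * b) := by rw [h4]
      _ = S ^ (e x) * (S ^ (e y) * ρ (conjK K (g ^ (-(e y))) a)) * ρ b := by
          rw [map_mul, zpow_add, mul_assoc, mul_assoc, mul_assoc]
      _ = S ^ (e x) * (ρ a * S ^ (e y)) * ρ b := by rw [h2]
      _ = (S ^ (e x) * ρ a) * (S ^ (e y) * ρ b) := by group
  set ρt : G →* (V →ₗ[ℂ] V)ˣ := MonoidHom.mk' f hfmul with hρt
  refine ⟨ρt, ?_⟩
  intro k
  have h0 : g ^ (-(0 : ℤ)) * (k : G) ∈ K := by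
    rw [neg_zero, zpow_zero, one_mul]; exact k.2
  have h1 : ρt (k : G) = S ^ ((0 : ℤ)) * ρ ⟨g ^ (-(0 : ℤ)) * (k : G), h0⟩ :=
    key (e (k : G)) 0 (k : G) (he (k : G)) h0
  rw [h1, zpow_zero, one_mul]
  congr 1
  apply Subtype.ext
  simp
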